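/- Let H be a compact Hausdorff topological group. Then the linear span of the set {Δ(f)·(g ⊗ 1) : f, g ∈ C(H)} is dense in C(H × H, ℂ) with the uniform norm, where Δ(f)(x,y) = f(xy) and (g ⊗ 1)(x,y) = g(x). -/

import Mathlib

set_option maxRecDepth 4000

open Submodule

private lemma sep_pt {H : Type*} [TopologicalSpace H] [CompactSpace H] [T2Space H]
    {a b : H} (hab : a ≠ b) : ∃ f : C(H, ℂ), f a ≠ f b := by
  obtain ⟨f, hf0, hf1, -⟩ := exists_continuous_zero_one_of_isClosed
    (isClosed_singleton (x := a)) (isClosed_singleton (x := b))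
    (Set.disjoint_singleton.mpr hab)
  refine ⟨⟨fun x => (f x : ℂ), Complex.continuous_ofReal.comp f.continuous⟩, ?_⟩
  simp only [ContinuousMap.coe_mk]
  rw [hf0 rfl, hf1 rfl]
  norm_num

/-- For a compact Hausdorff topological group `H`, the linear span of the
functions `(x, y) ↦ f (x * y) * g x` (i.e. `Δ(f) · (g ⊗ 1)` for `f, g ∈ C(H)`) is
dense in `C(H × H, ℂ)` with the uniform norm. -/
theorem dense_span_comult_mul_left (H : Type*) [TopologicalSpace H] [Group H]
    [IsTopologicalGroup H] [CompactSpace H] [T2Space H] :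
    Dense (Submodule.span ℂ
      {F : C(H × H, ℂ) | ∃ f g : C(H, ℂ), ∀ x y : H, F (x, y) = f (x * y) * g x} :
      Set C(H × H, ℂ)) := by
  set S : Set C(H × H, ℂ) :=
    {F : C(H × H, ℂ) | ∃ f g : C(H, ℂ), ∀ x y : H, F (x, y) = f (x * y) * g x} with hS
  have hone : (1 : C(H × H, ℂ)) ∈ S := ⟨1, 1, fun x y => by simp⟩
  have hmul : ∀ p ∈ span ℂ S, ∀ q ∈ span ℂ S, p * q ∈ span ℂ S := by
    intro p hp q hq
    have h1 : p * q ∈ span ℂ S * span ℂ S := mul_mem_mul hp hq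
    rw [span_mul_span] at h1
    refine span_le.mpr ?_ h1
    rintro _ ⟨F1, ⟨f1, g1, h1'⟩, F2, ⟨f2, g2, h2'⟩, rfl⟩
    refine subset_span ⟨f1 * f2, g1 * g2, fun x y => ?_⟩
    simp [h1' x y, h2' x y]; ring
  have hstar : ∀ p ∈ span ℂ S, star p ∈ span ℂ S := by
    intro p hp
    induction hp using Submodule.span_induction with
    | mem F hF =>
      obtain ⟨f, g, hfg⟩ := hF
      refine subset_span ⟨star f, star g, fun x y => ?_⟩
      simp [hfg x y]
    | zero => simp
    | add a b _ _ ha hb => rw [star_add]; exact add_mem ha hb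
    | smul c a _ ha => rw [star_smul]; exact smul_mem _ _ ha
  let A : StarSubalgebra ℂ C(H × H, ℂ) :=
    { carrier := span ℂ S
      mul_mem' := fun ha hb => hmul _ ha _ hb
      add_mem' := fun ha hb => add_mem ha hb
      one_mem' := subset_span hone
      algebraMap_mem' := fun c => by
        show (algebraMap ℂ C(H × H, ℂ)) c ∈ span ℂ S
        rw [Algebra.algebraMap_eq_smul_one]
        exact smul_mem _ _ (subset_span hone)
      star_mem' := fun {a} ha => hstar a ha }
  have hsep : A.SeparatesPoints := by
    rintro ⟨x1, y1⟩ ⟨x2, y2⟩ hne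
    by_cases hx : x1 = x2
    · subst hx
      have hy : y1 ≠ y2 := fun h => hne (by rw [h])
      have hxy : x1 * y1 ≠ x1 * y2 := fun h => hy (mul_left_cancel h)
      obtain ⟨f, hf⟩ := sep_pt hxy
      refine ⟨_, ⟨ContinuousMap.comp f ⟨fun p : H × H => p.1 * p.2, continuous_fst.mul continuous_snd⟩,
        subset_span ⟨f, 1, fun x y => by simp⟩, rfl⟩, ?_⟩
      simpa using hf
    · obtain ⟨g, hg⟩ := sep_pt hx
      refine ⟨_, ⟨ContinuousMap.comp g ⟨fun p : H × H => p.1, continuous_fst⟩,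
        subset_span ⟨1, g, fun x y => by simp⟩, rfl⟩, ?_⟩
      simpa using hg
  have htop := ContinuousMap.starSubalgebra_topologicalClosure_eq_top_of_separatesPoints A hsep
  have : closure (A : Set C(H × H, ℂ)) = Set.univ := by
    have := congrArg (fun B : StarSubalgebra ℂ C(H × H, ℂ) => (B : Set C(H × H, ℂ))) htop
    simpa [StarSubalgebra.topologicalClosure_coe] using this
  rw [dense_iff_closure_eq]
  exact this
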